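/- Let v : 2^M → ℝ≥0 be a monotone α-submodular valuation (α ≥ 1) and p : M → ℝ≥0 a price vector. Suppose S ⊆ M is strongly α-IR, i.e., α·v(T) ≥ p(T) for every T ⊆ S, and suppose D ⊆ M∖S maximizes v(D' | S) − p(D') over all D' ⊆ M∖S. Then S ∪ D is strongly α-IR: α·v(U) ≥ p(U) for every U ⊆ S ∪ D. -/

import Mathlib

lemma aux_marginal {M : Type*} [DecidableEq M]
    (α : ℝ) (v : Finset M → ℝ)
    (hsub : ∀ S T : Finset M, S ⊆ T → ∀ j : M, j ∉ T →
      α * (v (insert j S) - v S) ≥ v (insert j T) - v T) :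
    ∀ E T B : Finset M, T ⊆ B → Disjoint E B →
      v (E ∪ B) - v B ≤ α * (v (E ∪ T) - v T) := by
  intro E
  induction E using Finset.induction_on with
  | empty => intro T B _ _; simp
  | @insert a s ha ih =>
    intro T B hTB hdisj
    have haB : a ∉ B := (Finset.disjoint_left.mp hdisj) (Finset.mem_insert_self a s)
    have hsB : Disjoint s B := Finset.disjoint_insert_left.mp hdisj |>.2
    have h1 : v (insert a (s ∪ B)) - v (s ∪ B) ≤ α * (v (insert a (s ∪ T)) - v (s ∪ T)) := by
      have := hsub (s ∪ T) (s ∪ B) (Finset.union_subset_union_right hTB) a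
        (by simp [ha, haB])
      linarith
    have h2 := ih T B hTB hsB
    have e1 : insert a s ∪ B = insert a (s ∪ B) := Finset.insert_union a s B
    have e2 : insert a s ∪ T = insert a (s ∪ T) := Finset.insert_union a s T
    rw [e1, e2]
    linarith

/-- Lemma: strong `α`-IR is preserved by utility-maximizing
additions in Kelso–Crawford.  Let `v` be a monotone `α`-submodular valuation
(`α ≥ 1`) and `p` a price vector.  If `S` is strongly `α`-IR
(`α·v(T) ≥ p(T)` for all `T ⊆ S`) and `D ⊆ M ∖ S` maximizes
`v(D' | S) − p(D')` over all `D' ⊆ M ∖ S`, then `S ∪ D` is strongly `α`-IR. -/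
theorem strong_alpha_IR_preserved
    {M : Type*} [Fintype M] [DecidableEq M]
    (α : ℝ) (hα : 1 ≤ α)
    (v : Finset M → ℝ)
    (hv : ∀ S : Finset M, 0 ≤ v S)
    (hmono : ∀ S T : Finset M, S ⊆ T → v S ≤ v T)
    (hsub : ∀ S T : Finset M, S ⊆ T → ∀ j : M, j ∉ T →
      α * (v (insert j S) - v S) ≥ v (insert j T) - v T)
    (p : M → ℝ) (hp : ∀ j : M, 0 ≤ p j)
    (S : Finset M)
    (hSIR : ∀ T : Finset M, T ⊆ S → α * v T ≥ ∑ j ∈ T, p j)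
    (D : Finset M) (hD : Disjoint D S)
    (hDmax : ∀ D' : Finset M, Disjoint D' S →
      v (D ∪ S) - v S - (∑ j ∈ D, p j) ≥ v (D' ∪ S) - v S - ∑ j ∈ D', p j) :
    ∀ U : Finset M, U ⊆ S ∪ D → α * v U ≥ ∑ j ∈ U, p j := by
  intro U hU
  set T : Finset M := U ∩ S with hT
  set E : Finset M := U ∩ D with hE
  have hUTE : U = T ∪ E := by
    rw [hT, hE, ← Finset.inter_union_distrib_left]
    exact (Finset.inter_eq_left.mpr hU).symm
  have hTS : T ⊆ S := Finset.inter_subset_right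
  have hED : E ⊆ D := Finset.inter_subset_right
  have hTEdisj : Disjoint T E := by
    exact Finset.disjoint_of_subset_left hTS
      (Finset.disjoint_of_subset_right hED hD.symm)
  -- maximality with D' = D \ E
  have hD'S : Disjoint (D \ E) S := Finset.disjoint_of_subset_left (Finset.sdiff_subset) hD
  have hmax := hDmax (D \ E) hD'S
  have hpsum : ∑ j ∈ D, p j = (∑ j ∈ D \ E, p j) + ∑ j ∈ E, p j := by
    rw [Finset.sum_sdiff hED]
  have hmax' : ∑ j ∈ E, p j ≤ v (D ∪ S) - v ((D \ E) ∪ S) := by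
    rw [hpsum] at hmax; linarith
  -- apply aux lemma with E, T, B := (D \ E) ∪ S
  have hTB : T ⊆ (D \ E) ∪ S := hTS.trans (Finset.subset_union_right)
  have hEB : Disjoint E ((D \ E) ∪ S) := by
    rw [Finset.disjoint_union_right]
    exact ⟨Finset.disjoint_sdiff, Finset.disjoint_of_subset_left hED hD⟩
  have hEunion : E ∪ ((D \ E) ∪ S) = D ∪ S := by
    rw [← Finset.union_assoc, Finset.union_sdiff_of_subset hED]
  have haux := aux_marginal α v hsub E T ((D \ E) ∪ S) hTB hEB
  rw [hEunion] at haux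
  -- combine
  have hIR := hSIR T hTS
  have hUsum : ∑ j ∈ U, p j = (∑ j ∈ T, p j) + ∑ j ∈ E, p j := by
    rw [hUTE, Finset.sum_union hTEdisj]
  have hvU : v U = v (E ∪ T) := by rw [hUTE, Finset.union_comm]
  rw [hUsum, hvU]
  linarith
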